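/- Let f : ℝ → ℝ be monotone increasing and convex, and let a b : Fin n → ℝ. Let a' and b' denote the monotone sorts of a and b respectively. Then min over permutations σ of Fin n of ∑ i, f(|a(σ(i)) - b(i)|) equals ∑ i, f(|a'(i) - b'(i)|). -/

import Mathlib

open Finset

private lemma aux_convex (f : ℝ → ℝ) (hmono : Monotone f) (hconv : ConvexOn ℝ Set.univ f)
    (u v s t : ℝ) (h1 : u + v ≤ s + t) (h2 : u ≤ max s t) (h3 : v ≤ max s t) :
    f u + f v ≤ f s + f t := by
  wlog hst : s ≤ t generalizing s t
  · have := this t s (by linarith) (by rwa [max_comm]) (by rwa [max_comm]) (le_of_not_ge hst)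
    linarith
  rw [max_eq_right hst] at h2 h3
  rcases le_or_gt u s with hu | hu
  · exact add_le_add (hmono hu) (hmono h3)
  rcases le_or_gt v s with hv | hv
  · have := add_le_add (hmono h2) (hmono hv)
    linarith
  · have hst' : s < t := lt_of_lt_of_le hu h2
    have hdpos : (0:ℝ) < t - s := by linarith
    have key : ∀ w : ℝ, s ≤ w → w ≤ t → (t - s) * f w ≤ (t - w) * f s + (w - s) * f t := by
      intro w hsw hwt
      have hc := hconv.2 (Set.mem_univ s) (Set.mem_univ t)
        (show (0:ℝ) ≤ (t - w)/(t - s) from div_nonneg (by linarith) (by linarith))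
        (show (0:ℝ) ≤ (w - s)/(t - s) from div_nonneg (by linarith) (by linarith))
        (by field_simp; ring)
      have heq : ((t - w)/(t - s)) • s + ((w - s)/(t - s)) • t = w := by
        simp only [smul_eq_mul]; field_simp; ring
      rw [heq, smul_eq_mul, smul_eq_mul] at hc
      have := mul_le_mul_of_nonneg_left hc (le_of_lt hdpos)
      calc (t - s) * f w ≤ (t - s) * ((t - w)/(t - s) * f s + (w - s)/(t - s) * f t) := this
        _ = (t - w) * f s + (w - s) * f t := by field_simp
    have ku := key u (le_of_lt hu) h2
    have kv := key v (le_of_lt hv) h3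
    have hfs : f s ≤ f t := hmono hst
    have : (t - s) * (f u + f v) ≤ (t - s) * (f s + f t) := by nlinarith [mul_nonneg (show (0:ℝ) ≤ s + t - u - v by linarith) (show (0:ℝ) ≤ f t - f s by linarith)]
    exact le_of_mul_le_mul_left this hdpos

private lemma convex_exchange (f : ℝ → ℝ) (hmono : Monotone f) (hconv : ConvexOn ℝ Set.univ f)
    (x₁ x₂ y₁ y₂ : ℝ) (hx : x₁ ≤ x₂) (hy : y₁ ≤ y₂) :
    f |x₁ - y₁| + f |x₂ - y₂| ≤ f |x₁ - y₂| + f |x₂ - y₁| := by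
  apply aux_convex f hmono hconv
  · rcases abs_cases (x₁ - y₁) with ⟨e1,_⟩|⟨e1,_⟩ <;>
    rcases abs_cases (x₂ - y₂) with ⟨e2,_⟩|⟨e2,_⟩ <;>
    rcases abs_cases (x₁ - y₂) with ⟨e3,_⟩|⟨e3,_⟩ <;>
    rcases abs_cases (x₂ - y₁) with ⟨e4,_⟩|⟨e4,_⟩ <;>
    rw [e1, e2, e3, e4] <;> linarith
  · rcases le_total x₁ y₁ with h | h
    · apply le_max_of_le_left
      rw [abs_of_nonpos (by linarith)]
      calc -(x₁ - y₁) = y₁ - x₁ := by ring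
        _ ≤ y₂ - x₁ := by linarith
        _ = -(x₁ - y₂) := by ring
        _ ≤ |x₁ - y₂| := neg_le_abs _
    · apply le_max_of_le_right
      rw [abs_of_nonneg (by linarith)]
      calc x₁ - y₁ ≤ x₂ - y₁ := by linarith
        _ ≤ |x₂ - y₁| := le_abs_self _
  · rcases le_total x₂ y₂ with h | h
    · apply le_max_of_le_left
      rw [abs_of_nonpos (by linarith)]
      calc -(x₂ - y₂) = y₂ - x₂ := by ring
        _ ≤ y₂ - x₁ := by linarith
        _ = -(x₁ - y₂) := by ring
        _ ≤ |x₁ - y₂| := neg_le_abs _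
    · apply le_max_of_le_right
      rw [abs_of_nonneg (by linarith)]
      calc x₂ - y₂ ≤ x₂ - y₁ := by linarith
        _ ≤ |x₂ - y₁| := le_abs_self _

private lemma sorted_min (f : ℝ → ℝ) (hmono : Monotone f) (hconv : ConvexOn ℝ Set.univ f)
    {n : ℕ} (a b : Fin n → ℝ) (ha : Monotone a) (hb : Monotone b)
    (σ : Equiv.Perm (Fin n)) :
    ∑ i, f |a i - b i| ≤ ∑ i, f |a (σ i) - b i| := by
  generalize hk : σ.support.card = k
  induction k using Nat.strong_induction_on generalizing σ with
  | _ k ih =>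
    rcases Nat.eq_zero_or_pos k with h0 | hpos
    · subst h0
      have : σ.support = ∅ := Finset.card_eq_zero.mp hk
      have hσ : σ = 1 := Equiv.Perm.support_eq_empty_iff.mp this
      subst hσ; simp
    · have hS : σ.support.Nonempty := Finset.card_pos.mp (hk ▸ hpos)
      set j := σ.support.max' hS with hj
      have hjS : j ∈ σ.support := σ.support.max'_mem hS
      set i₀ := σ⁻¹ j with hi₀
      have hσi₀ : σ i₀ = j := Equiv.apply_symm_apply σ j
      have hσjS : σ j ∈ σ.support := Equiv.Perm.apply_mem_support.mpr hjS
      have hσjj : σ j ≤ j := Finset.le_max' _ _ hσjS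
      have hi₀S : i₀ ∈ σ.support := by
        by_contra h
        have : σ i₀ = i₀ := Equiv.Perm.notMem_support.mp h
        rw [hσi₀] at this
        exact h (this ▸ hjS)
      have hi₀j : i₀ ≤ j := Finset.le_max' _ _ hi₀S
      have hi₀ne : i₀ ≠ j := by
        intro h
        have := Equiv.Perm.mem_support.mp hjS
        rw [← h, hσi₀] at this
        exact this h.symm
      set σ' := σ * Equiv.swap i₀ j with hσ'
      have hσ'j : σ' j = j := by
        simp [hσ', Equiv.Perm.mul_apply, Equiv.swap_apply_right, hσi₀]
      have hσ'i₀ : σ' i₀ = σ j := by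
        simp [hσ', Equiv.Perm.mul_apply, Equiv.swap_apply_left]
      have hσ'other : ∀ i, i ≠ i₀ → i ≠ j → σ' i = σ i := by
        intro i h1 h2
        simp [hσ', Equiv.Perm.mul_apply, Equiv.swap_apply_of_ne_of_ne h1 h2]
      have hsupp : σ'.support ⊆ σ.support.erase j := by
        intro i hi
        have hi' : σ' i ≠ i := Equiv.Perm.mem_support.mp hi
        have hij : i ≠ j := by intro h; subst h; exact hi' hσ'j
        refine Finset.mem_erase.mpr ⟨hij, Equiv.Perm.mem_support.mpr ?_⟩
        intro hfix
        have hii₀ : i ≠ i₀ := by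
          intro h; subst h; rw [hσi₀] at hfix; exact hij hfix.symm
        exact hi' ((hσ'other i hii₀ hij).trans hfix)
      have hcard : σ'.support.card < k := by
        calc σ'.support.card ≤ (σ.support.erase j).card := Finset.card_le_card hsupp
          _ < σ.support.card := Finset.card_erase_lt_of_mem hjS
          _ = k := hk
      have step1 : ∑ i, f |a i - b i| ≤ ∑ i, f |a (σ' i) - b i| :=
        ih _ hcard σ' rfl
      have step2 : ∑ i, f |a (σ' i) - b i| ≤ ∑ i, f |a (σ i) - b i| := by
        have hpair : ({i₀, j} : Finset (Fin n)) ⊆ Finset.univ := Finset.subset_univ _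
        rw [← Finset.sum_sdiff hpair, ← Finset.sum_sdiff hpair]
        have heq : ∑ i ∈ Finset.univ \ {i₀, j}, f |a (σ' i) - b i|
            = ∑ i ∈ Finset.univ \ {i₀, j}, f |a (σ i) - b i| := by
          apply Finset.sum_congr rfl
          intro i hi
          simp only [Finset.mem_sdiff, Finset.mem_insert, Finset.mem_singleton] at hi
          rw [hσ'other i (fun h => hi.2 (Or.inl h)) (fun h => hi.2 (Or.inr h))]
        rw [heq]
        apply add_le_add le_rfl
        rw [Finset.sum_pair hi₀ne, Finset.sum_pair hi₀ne, hσ'i₀, hσ'j, hσi₀]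
        have := convex_exchange f hmono hconv (a (σ j)) (a j) (b i₀) (b j)
          (ha hσjj) (hb hi₀j)
        linarith
      exact step1.trans step2

theorem matching_loss_eq_sorted (f : ℝ → ℝ) (hmono : Monotone f)
    (hconv : ConvexOn ℝ Set.univ f) {n : ℕ} (a b a' b' : Fin n → ℝ)
    (τ ρ : Equiv.Perm (Fin n)) (ha' : a' = a ∘ τ) (hb' : b' = b ∘ ρ)
    (hma : Monotone a') (hmb : Monotone b') :
    Finset.univ.inf' Finset.univ_nonempty
        (fun σ : Equiv.Perm (Fin n) => ∑ i, f |a (σ i) - b i|)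
      = ∑ i, f |a' i - b' i| := by
  apply le_antisymm
  · have h1 := Finset.inf'_le (fun σ : Equiv.Perm (Fin n) => ∑ i, f |a (σ i) - b i|)
      (Finset.mem_univ (ρ.symm.trans τ))
    refine h1.trans (le_of_eq ?_)
    subst ha' hb'
    exact (Fintype.sum_equiv ρ _ _ (by intro j; simp)).symm
  · apply Finset.le_inf'
    intro σ _
    have key := sorted_min f hmono hconv a' b' hma hmb (ρ.trans (σ.trans τ.symm))
    refine key.trans (le_of_eq ?_)
    subst ha' hb'
    exact Fintype.sum_equiv ρ _ _ (by intro j; simp)
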